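/- Let ℋ be a (complex) Banach space and f : ℝ → ℋ an equi-Weyl almost periodic function in W(ℝ, ℋ) (with respect to the truncated metric min{1, ‖x−y‖}). Suppose that for every ε > 0 there exist δ > 0 and l > 0 such that sup_{ξ∈ℝ} meas{t ∈ [ξ, ξ+l] : ‖f(t)‖ < δ} < ε·l. Then the function sgn f, defined by (sgn f)(t) = f(t)/‖f(t)‖ if f(t) ≠ 0 and 0 otherwise, belongs to W₁(ℝ, ℋ), and the set T = {t ∈ ℝ : f(t) = 0} satisfies lim_{l→∞} sup_{ξ} (1/l) meas(T ∩ [ξ, ξ+l]) = 0. -/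

import Mathlib

open MeasureTheory Filter
open scoped ENNReal

/-- A set `T ⊆ ℝ` is relatively dense. -/
def RelDense (T : Set ℝ) : Prop :=
  ∃ a > (0 : ℝ), ∀ ξ : ℝ, ∃ τ ∈ T, ξ ≤ τ ∧ τ ≤ ξ + a

/-- `f ∈ W(ℝ,ℋ)`: equi-Weyl a.p. w.r.t. the truncated metric `min 1 ‖x−y‖`. -/
def WAPn {H : Type*} [NormedAddCommGroup H] (f : ℝ → H) : Prop :=
  AEStronglyMeasurable f volume ∧
    ∀ ε > (0 : ℝ), ∃ l > (0 : ℝ), RelDense {τ : ℝ |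
      (⨆ ξ : ℝ, (1 / l) * ∫ t in ξ..(ξ + l), min 1 ‖f t - f (t + τ)‖) < ε}

/-- `f ∈ W₁(ℝ,ℋ)`: equi-Weyl a.p. of degree 1. -/
def W1APn {H : Type*} [NormedAddCommGroup H] (f : ℝ → H) : Prop :=
  AEStronglyMeasurable f volume ∧
    (∃ C : ℝ, ∀ ξ : ℝ, (∫ t in ξ..(ξ + 1), ‖f t‖) ≤ C) ∧
    ∀ ε > (0 : ℝ), ∃ l > (0 : ℝ), RelDense {τ : ℝ |
      (⨆ ξ : ℝ, (1 / l) * ∫ t in ξ..(ξ + l), ‖f t - f (t + τ)‖) < ε}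

open scoped Classical in
/-- The "sign" of a vector: `h/‖h‖` if `h ≠ 0`, and `0` otherwise. -/
noncomputable def sgn {H : Type*} [NormedAddCommGroup H] [NormedSpace ℂ H] (h : H) : H :=
  if h = 0 then 0 else ‖h‖⁻¹ • h

/-- The Lipschitz truncation `h ↦ h / max δ ‖h‖`. -/
noncomputable def Gm {H : Type*} [NormedAddCommGroup H] [NormedSpace ℂ H] (δ : ℝ) (h : H) : H :=
  (max δ ‖h‖)⁻¹ • h

lemma RelDense.mono {T T' : Set ℝ} (h : RelDense T) (hsub : T ⊆ T') : RelDense T' := by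
  obtain ⟨a, ha, hT⟩ := h
  exact ⟨a, ha, fun ξ => by obtain ⟨τ, hτ, h1, h2⟩ := hT ξ; exact ⟨τ, hsub hτ, h1, h2⟩⟩

section basic
variable {H : Type*} [NormedAddCommGroup H] [NormedSpace ℂ H]

lemma norm_sgn_le (h : H) : ‖sgn h‖ ≤ 1 := by
  unfold sgn
  split_ifs with h0
  · simp
  · have : ‖h‖ ≠ 0 := by simpa using h0
    rw [norm_smul, Real.norm_eq_abs, abs_of_nonneg (by positivity), inv_mul_cancel₀ this]

lemma norm_Gm_le {δ : ℝ} (hδ : 0 < δ) (h : H) : ‖Gm δ h‖ ≤ 1 := by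
  unfold Gm
  have hm : 0 < max δ ‖h‖ := lt_max_of_lt_left hδ
  rw [norm_smul, Real.norm_eq_abs, abs_of_nonneg (by positivity)]
  rw [inv_mul_le_iff₀ hm]
  simp

lemma Gm_eq_sgn {δ : ℝ} (hδ : 0 < δ) {h : H} (hh : δ ≤ ‖h‖) : Gm δ h = sgn h := by
  have h0 : h ≠ 0 := by
    intro h0; rw [h0, norm_zero] at hh; linarith
  unfold Gm sgn
  rw [if_neg h0, max_eq_right hh]

lemma Gm_lip {δ : ℝ} (hδ : 0 < δ) (hδ1 : δ ≤ 1) (x y : H) :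
    ‖Gm δ x - Gm δ y‖ ≤ (2 / δ) * min 1 ‖x - y‖ := by
  have ha : 0 < max δ ‖x‖ := lt_max_of_lt_left hδ
  have hb : 0 < max δ ‖y‖ := lt_max_of_lt_left hδ
  set a := max δ ‖x‖ with h_a
  set b := max δ ‖y‖ with h_b
  have key : ‖Gm δ x - Gm δ y‖ ≤ (2 / δ) * ‖x - y‖ := by
    have hdecomp : Gm δ x - Gm δ y = a⁻¹ • (x - y) + (a⁻¹ - b⁻¹) • y := by
      unfold Gm
      rw [smul_sub, sub_smul]
      abel
    have h1 : ‖a⁻¹ • (x - y)‖ ≤ ‖x - y‖ / δ := by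
      rw [norm_smul, Real.norm_eq_abs, abs_of_nonneg (by positivity)]
      rw [div_eq_inv_mul]
      gcongr
      exact le_max_left _ _
    have habs : |b - a| ≤ ‖x - y‖ := by
      have := abs_max_sub_max_le_abs ‖y‖ ‖x‖ δ
      rw [max_comm ‖y‖ δ, max_comm ‖x‖ δ] at this
      calc |b - a| ≤ |‖y‖ - ‖x‖| := this
        _ ≤ ‖y - x‖ := abs_norm_sub_norm_le _ _
        _ = ‖x - y‖ := norm_sub_rev _ _
    have h2 : ‖(a⁻¹ - b⁻¹) • y‖ ≤ ‖x - y‖ / δ := by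
      rw [norm_smul, Real.norm_eq_abs]
      have heq : a⁻¹ - b⁻¹ = (b - a) / (a * b) := by
        field_simp
      rw [heq, abs_div, abs_of_nonneg (by positivity : (0:ℝ) ≤ a * b)]
      have hyb : ‖y‖ ≤ b := le_max_right _ _
      calc |b - a| / (a * b) * ‖y‖ ≤ ‖x - y‖ / (a * b) * b := by
            gcongr
        _ = ‖x - y‖ / a := by field_simp
        _ ≤ ‖x - y‖ / δ := by gcongr; exact le_max_left _ _
    calc ‖Gm δ x - Gm δ y‖ ≤ ‖a⁻¹ • (x - y)‖ + ‖(a⁻¹ - b⁻¹) • y‖ := by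
          rw [hdecomp]; exact norm_add_le _ _
      _ ≤ ‖x - y‖ / δ + ‖x - y‖ / δ := add_le_add h1 h2
      _ = (2 / δ) * ‖x - y‖ := by ring
  rcases le_total ‖x - y‖ 1 with h | h
  · rw [min_eq_right h]; exact key
  · rw [min_eq_left h]
    calc ‖Gm δ x - Gm δ y‖ ≤ ‖Gm δ x‖ + ‖Gm δ y‖ := norm_sub_le _ _
      _ ≤ 1 + 1 := add_le_add (norm_Gm_le hδ _) (norm_Gm_le hδ _)
      _ ≤ (2 / δ) * 1 := by rw [mul_one]; rw [le_div_iff₀ hδ]; linarith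

variable {f : ℝ → H}

lemma aesm_sgn (hf : AEStronglyMeasurable f volume) :
    AEStronglyMeasurable (fun t => sgn (f t)) volume := by
  obtain ⟨g, hg, hfg⟩ := hf
  refine ⟨fun t => sgn (g t), ?_, ?_⟩
  · have hset : MeasurableSet {t | g t = 0} := by
      have : {t | g t = 0} = (fun t => ‖g t‖) ⁻¹' {0} := by
        ext t; simp [norm_eq_zero]
      rw [this]
      exact hg.norm.measurable (measurableSet_singleton 0)
    have hinner : StronglyMeasurable (fun t => ‖g t‖⁻¹ • g t) :=
      StronglyMeasurable.smul (𝕜 := ℝ) (hg.norm.measurable.inv.stronglyMeasurable) hg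
    have heq : (fun t => sgn (g t)) = Set.indicator {t | g t = 0}ᶜ (fun t => ‖g t‖⁻¹ • g t) := by
      funext t
      by_cases h0 : g t = 0
      · simp [sgn, h0, Set.indicator_of_notMem, h0]
      · rw [Set.indicator_of_mem (by simpa using h0)]
        simp [sgn, h0]
    rw [heq]
    exact hinner.indicator hset.compl
  · filter_upwards [hfg] with t ht
    rw [ht]

lemma cont_Gm {δ : ℝ} (hδ : 0 < δ) : Continuous (fun h : H => Gm δ h) := by
  unfold Gm
  exact ((continuous_const.max continuous_norm).inv₀
    (fun x => ne_of_gt (lt_max_of_lt_left hδ))).smul continuous_id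

lemma aesm_Gm {δ : ℝ} (hδ : 0 < δ) (hf : AEStronglyMeasurable f volume) :
    AEStronglyMeasurable (fun t => Gm δ (f t)) volume :=
  (cont_Gm hδ).comp_aestronglyMeasurable hf

omit [NormedSpace ℂ H] in
lemma aesm_shift (hf : AEStronglyMeasurable f volume) (τ : ℝ) :
    AEStronglyMeasurable (fun t => f (t + τ)) volume :=
  hf.comp_measurePreserving (measurePreserving_add_right volume τ)

end basic

/-- interval integrability of bounded a.e.-strongly measurable functions -/
lemma intInt {g : ℝ → ℝ} (hg : AEStronglyMeasurable g volume) {C : ℝ}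
    (hC : ∀ t, ‖g t‖ ≤ C) (a b : ℝ) : IntervalIntegrable g volume a b :=
  (intervalIntegrable_const (c := C)).mono_fun hg.restrict
    (Filter.Eventually.of_forall fun t => (hC t).trans (le_abs_self C))

/-- Covering lemma: bound on long windows from a uniform bound on windows of length `l₁`. -/
lemma cover {S : Set ℝ} {l₁ ε₁ : ℝ} (hl₁ : 0 < l₁) (hε₁ : 0 ≤ ε₁)
    (h : ∀ ξ : ℝ, volume (S ∩ Set.Icc ξ (ξ + l₁)) ≤ ENNReal.ofReal (ε₁ * l₁)) :
    ∀ ξ L : ℝ, l₁ ≤ L → volume (S ∩ Set.Icc ξ (ξ + L)) ≤ ENNReal.ofReal (2 * ε₁ * L) := by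
  intro ξ L hL
  have hL0 : 0 < L := hl₁.trans_le hL
  set M : ℕ := ⌊L / l₁⌋₊ + 1 with hM
  have hcov : S ∩ Set.Icc ξ (ξ + L) ⊆
      ⋃ k ∈ Finset.range M, S ∩ Set.Icc (ξ + k * l₁) (ξ + k * l₁ + l₁) := by
    rintro t ⟨htS, ht1, ht2⟩
    have ht0 : 0 ≤ t - ξ := by linarith
    set k : ℕ := ⌊(t - ξ) / l₁⌋₊ with hk
    have hk1 : (k : ℝ) * l₁ ≤ t - ξ := by
      have := Nat.floor_le (by positivity : (0:ℝ) ≤ (t - ξ) / l₁)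
      calc (k : ℝ) * l₁ ≤ (t - ξ) / l₁ * l₁ := by gcongr
        _ = t - ξ := by field_simp
    have hk2 : t - ξ < (k : ℝ) * l₁ + l₁ := by
      have := Nat.lt_floor_add_one ((t - ξ) / l₁)
      have h2 : t - ξ < ((k : ℝ) + 1) * l₁ := by
        rw [← div_lt_iff₀ hl₁]; push_cast; linarith
      linarith
    have hkM : k < M := by
      have : k ≤ ⌊L / l₁⌋₊ := Nat.floor_mono (by gcongr; linarith)
      omega
    refine Set.mem_biUnion (Finset.mem_range.2 hkM) ⟨htS, by constructor <;> linarith⟩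
  calc volume (S ∩ Set.Icc ξ (ξ + L))
      ≤ volume (⋃ k ∈ Finset.range M, S ∩ Set.Icc (ξ + k * l₁) (ξ + k * l₁ + l₁)) :=
        measure_mono hcov
    _ ≤ ∑ k ∈ Finset.range M, volume (S ∩ Set.Icc (ξ + k * l₁) (ξ + k * l₁ + l₁)) :=
        measure_biUnion_finset_le _ _
    _ ≤ ∑ _k ∈ Finset.range M, ENNReal.ofReal (ε₁ * l₁) :=
        Finset.sum_le_sum fun k _ => h (ξ + k * l₁)
    _ = (M : ℝ≥0∞) * ENNReal.ofReal (ε₁ * l₁) := by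
        rw [Finset.sum_const, Finset.card_range, nsmul_eq_mul]
    _ ≤ ENNReal.ofReal (2 * ε₁ * L) := by
        rw [← ENNReal.ofReal_natCast, ← ENNReal.ofReal_mul (by positivity)]
        apply ENNReal.ofReal_le_ofReal
        have hMle : (M : ℝ) ≤ L / l₁ + 1 := by
          rw [hM]; push_cast
          have := Nat.floor_le (by positivity : (0:ℝ) ≤ L / l₁)
          linarith
        have h1 : (1:ℝ) ≤ L / l₁ := (one_le_div hl₁).2 hL
        calc (M : ℝ) * (ε₁ * l₁) ≤ (L / l₁ + L / l₁) * (ε₁ * l₁) := by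
              apply mul_le_mul_of_nonneg_right _ (by positivity)
              linarith
          _ = 2 * ε₁ * L := by field_simp; ring

/-- Integral of a function supported on `S`, bounded by 2. -/
lemma intE {u : ℝ → ℝ} (hu : AEStronglyMeasurable u volume) (h0 : ∀ t, 0 ≤ u t)
    (h2 : ∀ t, u t ≤ 2) {S : Set ℝ} (hS : ∀ t, u t ≠ 0 → t ∈ S) {ξ η : ℝ} (hle : ξ ≤ η) :
    (∫ t in ξ..η, u t) ≤ 2 * (volume (S ∩ Set.Icc ξ η)).toReal := by
  rw [intervalIntegral.integral_of_le hle,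
    MeasureTheory.integral_eq_lintegral_of_nonneg_ae (Filter.Eventually.of_forall h0) hu.restrict]
  have hfin : volume (S ∩ Set.Icc ξ η) ≠ ⊤ :=
    ((measure_mono Set.inter_subset_right).trans_lt measure_Icc_lt_top).ne
  have key : (∫⁻ t in Set.Ioc ξ η, ENNReal.ofReal (u t)) ≤
      ENNReal.ofReal 2 * volume (S ∩ Set.Icc ξ η) := by
    calc (∫⁻ t in Set.Ioc ξ η, ENNReal.ofReal (u t))
        ≤ ∫⁻ t in Set.Ioc ξ η, S.indicator (fun _ => ENNReal.ofReal 2) t := by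
          apply lintegral_mono
          intro t
          by_cases htS : t ∈ S
          · rw [Set.indicator_of_mem htS]
            exact ENNReal.ofReal_le_ofReal (h2 t)
          · rw [Set.indicator_of_notMem htS]
            have : u t = 0 := by by_contra hne; exact htS (hS t hne)
            simp [this]
      _ ≤ ENNReal.ofReal 2 * (volume.restrict (Set.Ioc ξ η)) S :=
          lintegral_indicator_const_le _ _
      _ ≤ ENNReal.ofReal 2 * volume (S ∩ Set.Icc ξ η) := by
          rw [Measure.restrict_apply' measurableSet_Ioc]
          exact mul_le_mul_right
            (measure_mono (Set.inter_subset_inter_right _ Set.Ioc_subset_Icc_self)) _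
  calc (∫⁻ t in Set.Ioc ξ η, ENNReal.ofReal (u t)).toReal
      ≤ (ENNReal.ofReal 2 * volume (S ∩ Set.Icc ξ η)).toReal := by
        apply ENNReal.toReal_mono _ key
        exact ENNReal.mul_ne_top ENNReal.ofReal_ne_top hfin
    _ = 2 * (volume (S ∩ Set.Icc ξ η)).toReal := by
        rw [ENNReal.toReal_mul, ENNReal.toReal_ofReal (by norm_num)]

/-- Extract a per-window measure bound from the sup hypothesis. -/
lemma sep_bound {H : Type*} [NormedAddCommGroup H] {f : ℝ → H} {δ l₁ ε₁ : ℝ} (hl₁ : 0 < l₁)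
    (hsup : (⨆ ξ : ℝ, (volume {t ∈ Set.Icc ξ (ξ + l₁) | ‖f t‖ < δ}).toReal) < ε₁ * l₁) :
    ∀ ξ : ℝ, volume ({t : ℝ | ‖f t‖ < δ} ∩ Set.Icc ξ (ξ + l₁)) ≤ ENNReal.ofReal (ε₁ * l₁) := by
  intro ξ
  have hsets : {t : ℝ | ‖f t‖ < δ} ∩ Set.Icc ξ (ξ + l₁)
      = {t ∈ Set.Icc ξ (ξ + l₁) | ‖f t‖ < δ} := by
    ext t; simp [Set.mem_sep_iff, and_comm]
  have hfin : ∀ ζ : ℝ, volume {t ∈ Set.Icc ζ (ζ + l₁) | ‖f t‖ < δ} ≠ ⊤ := fun ζ =>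
    ((measure_mono (Set.sep_subset _ _)).trans_lt measure_Icc_lt_top).ne
  have hbdd : BddAbove (Set.range fun ζ : ℝ =>
      (volume {t ∈ Set.Icc ζ (ζ + l₁) | ‖f t‖ < δ}).toReal) := by
    refine ⟨l₁, ?_⟩
    rintro _ ⟨ζ, rfl⟩
    calc (volume {t ∈ Set.Icc ζ (ζ + l₁) | ‖f t‖ < δ}).toReal
        ≤ (volume (Set.Icc ζ (ζ + l₁))).toReal :=
          ENNReal.toReal_mono measure_Icc_lt_top.ne (measure_mono (Set.sep_subset _ _))
      _ = l₁ := by rw [Real.volume_Icc]; simp [ENNReal.toReal_ofReal hl₁.le]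
  have hξ : (volume {t ∈ Set.Icc ξ (ξ + l₁) | ‖f t‖ < δ}).toReal < ε₁ * l₁ :=
    lt_of_le_of_lt (le_ciSup hbdd ξ) hsup
  rw [hsets]
  exact ((ENNReal.lt_ofReal_iff_toReal_lt (hfin ξ)).2 hξ).le

theorem stmt10 {H : Type*} [NormedAddCommGroup H] [NormedSpace ℂ H] [CompleteSpace H]
    (f : ℝ → H) (hf : WAPn f)
    (hsep : ∀ ε > (0 : ℝ), ∃ δ > (0 : ℝ), ∃ l > (0 : ℝ),
      (⨆ ξ : ℝ, (volume {t ∈ Set.Icc ξ (ξ + l) | ‖f t‖ < δ}).toReal) < ε * l) :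
    W1APn (fun t => sgn (f t)) ∧
      Tendsto
        (fun l : ℝ => ⨆ ξ : ℝ,
          (1 / l) * (volume ({t : ℝ | f t = 0} ∩ Set.Icc ξ (ξ + l))).toReal)
        atTop (nhds 0) := by
  have hmf := hf.1
  constructor
  · refine ⟨aesm_sgn hmf, ⟨1, fun ξ => ?_⟩, fun ε hε => ?_⟩
    · -- uniform bound on unit-interval integrals
      have hii : IntervalIntegrable (fun t => ‖sgn (f t)‖) volume ξ (ξ + 1) :=
        intInt (aesm_sgn hmf).norm (C := 1)
          (fun t => by
            rw [Real.norm_eq_abs, abs_of_nonneg (norm_nonneg _)]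
            exact norm_sgn_le _) _ _
      calc (∫ t in ξ..(ξ + 1), ‖sgn (f t)‖) ≤ ∫ _t in ξ..(ξ + 1), (1:ℝ) := by
            apply intervalIntegral.integral_mono_on (by linarith) hii intervalIntegrable_const
            exact fun t _ => norm_sgn_le _
        _ = 1 := by simp
    · -- main equi-Weyl estimate for sgn ∘ f
      obtain ⟨δ₀, hδ₀, l₁, hl₁, hsup⟩ := hsep (ε / 32) (by positivity)
      set δ : ℝ := min δ₀ 1 with hδdef
      have hδ : 0 < δ := lt_min hδ₀ one_pos
      have hδ1 : δ ≤ 1 := min_le_right _ _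
      set S : Set ℝ := {t : ℝ | ‖f t‖ < δ} with hS
      have hvol : ∀ ξ : ℝ, volume (S ∩ Set.Icc ξ (ξ + l₁)) ≤ ENNReal.ofReal (ε / 32 * l₁) := by
        intro ξ
        refine le_trans (measure_mono (Set.inter_subset_inter_left _ ?_)) (sep_bound hl₁ hsup ξ)
        intro t ht
        simp only [Set.mem_setOf_eq] at ht ⊢
        exact lt_of_lt_of_le ht (min_le_left _ _)
      obtain ⟨l₂, hl₂, hRD⟩ := hf.2 (ε * δ / 8) (by positivity)
      set N : ℕ := max 1 ⌈l₁ / l₂⌉₊ with hN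
      set L : ℝ := N * l₂ with hLdef
      have hN1 : 1 ≤ N := le_max_left _ _
      have hL0 : 0 < L := by
        have : (1:ℝ) ≤ N := by exact_mod_cast hN1
        positivity
      have hl₁L : l₁ ≤ L := by
        have h1 : l₁ / l₂ ≤ (⌈l₁ / l₂⌉₊ : ℝ) := Nat.le_ceil _
        have h2 : (⌈l₁ / l₂⌉₊ : ℝ) ≤ N := by exact_mod_cast le_max_right 1 ⌈l₁ / l₂⌉₊
        calc l₁ = l₁ / l₂ * l₂ := by field_simp
          _ ≤ (N : ℝ) * l₂ := by gcongr; linarith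
      refine ⟨L, hL0, hRD.mono ?_⟩
      intro τ hτ
      simp only [Set.mem_setOf_eq] at hτ ⊢
      -- integrands and their measurability
      have mτ : AEStronglyMeasurable (fun t => f (t + τ)) volume := aesm_shift hmf τ
      have mmin : AEStronglyMeasurable (fun t => min 1 ‖f t - f (t + τ)‖) volume :=
        ((aemeasurable_const (b := (1:ℝ))).min ((hmf.sub mτ).norm.aemeasurable)).aestronglyMeasurable
      have iimin : ∀ a b : ℝ, IntervalIntegrable (fun t => min 1 ‖f t - f (t + τ)‖) volume a b :=
        intInt mmin (C := 1) (fun t => by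
          rw [Real.norm_eq_abs, abs_of_nonneg (le_min zero_le_one (norm_nonneg _))]
          exact min_le_left _ _)
      -- per-chunk bound from hτ
      have hbdd : BddAbove (Set.range fun ξ : ℝ =>
          (1 / l₂) * ∫ t in ξ..(ξ + l₂), min 1 ‖f t - f (t + τ)‖) := by
        refine ⟨1, ?_⟩
        rintro _ ⟨ξ, rfl⟩
        have : (∫ t in ξ..(ξ + l₂), min 1 ‖f t - f (t + τ)‖) ≤ ∫ _t in ξ..(ξ + l₂), (1:ℝ) := by
          apply intervalIntegral.integral_mono_on (by linarith) (iimin _ _)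
            intervalIntegrable_const
          exact fun t _ => min_le_left _ _
        have h1 : (∫ _t in ξ..(ξ + l₂), (1:ℝ)) = l₂ := by simp
        rw [h1] at this
        calc (1 / l₂) * ∫ t in ξ..(ξ + l₂), min 1 ‖f t - f (t + τ)‖ ≤ (1 / l₂) * l₂ := by
              apply mul_le_mul_of_nonneg_left this (by positivity)
          _ = 1 := by field_simp
      have hchunk : ∀ ξ' : ℝ,
          (∫ t in ξ'..(ξ' + l₂), min 1 ‖f t - f (t + τ)‖) ≤ ε * δ / 8 * l₂ := by
        intro ξ'
        have h1 : (1 / l₂) * (∫ t in ξ'..(ξ' + l₂), min 1 ‖f t - f (t + τ)‖) < ε * δ / 8 :=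
          lt_of_le_of_lt (le_ciSup hbdd ξ') hτ
        rw [one_div, inv_mul_lt_iff₀ hl₂] at h1
        linarith [h1]
      -- the W-error function u
      set u : ℝ → ℝ := fun t => ‖sgn (f t) - Gm δ (f t)‖ with hu
      have mu : AEStronglyMeasurable u volume := ((aesm_sgn hmf).sub (aesm_Gm hδ hmf)).norm
      have hu0 : ∀ t, 0 ≤ u t := fun t => norm_nonneg _
      have hu2 : ∀ t, u t ≤ 2 := fun t =>
        (norm_sub_le _ _).trans (by linarith [norm_sgn_le (f t), norm_Gm_le hδ (f t)])
      have huS : ∀ t, u t ≠ 0 → t ∈ S := by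
        intro t hne
        by_contra htS
        have : δ ≤ ‖f t‖ := not_lt.1 htS
        exact hne (by rw [hu]; simp [Gm_eq_sgn hδ this])
      -- covering bound on u's support
      have hcov : ∀ ξ' : ℝ, (volume (S ∩ Set.Icc ξ' (ξ' + L))).toReal ≤ 2 * (ε / 32) * L := by
        intro ξ'
        have := cover hl₁ (by positivity) hvol ξ' L hl₁L
        calc (volume (S ∩ Set.Icc ξ' (ξ' + L))).toReal
            ≤ (ENNReal.ofReal (2 * (ε / 32) * L)).toReal :=
              ENNReal.toReal_mono ENNReal.ofReal_ne_top this
          _ = 2 * (ε / 32) * L := ENNReal.toReal_ofReal (by positivity)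
      have hIu : ∀ ξ' : ℝ, (∫ t in ξ'..(ξ' + L), u t) ≤ 4 * (ε / 32) * L := by
        intro ξ'
        calc (∫ t in ξ'..(ξ' + L), u t) ≤ 2 * (volume (S ∩ Set.Icc ξ' (ξ' + L))).toReal :=
              intE mu hu0 hu2 huS (by linarith)
          _ ≤ 2 * (2 * (ε / 32) * L) := by
              have := hcov ξ'; linarith
          _ = 4 * (ε / 32) * L := by ring
      -- now the per-ξ estimate for the full sup
      have hper : ∀ ξ : ℝ,
          (1 / L) * (∫ t in ξ..(ξ + L), ‖sgn (f t) - sgn (f (t + τ))‖) ≤ ε / 2 := by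
        intro ξ
        have hξL : ξ ≤ ξ + L := by linarith
        -- integrability of everything
        have i1 : IntervalIntegrable (fun t => ‖sgn (f t) - sgn (f (t + τ))‖) volume ξ (ξ + L) :=
          intInt ((aesm_sgn hmf).sub (aesm_shift (aesm_sgn hmf) τ)).norm (C := 2)
            (fun t => by
              rw [Real.norm_eq_abs, abs_of_nonneg (norm_nonneg _)]
              exact (norm_sub_le _ _).trans
                (by linarith [norm_sgn_le (f t), norm_sgn_le (f (t + τ))])) _ _
        have i2 : IntervalIntegrable u volume ξ (ξ + L) :=
          intInt mu (C := 2) (fun t => by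
            rw [Real.norm_eq_abs, abs_of_nonneg (hu0 t)]; exact hu2 t) _ _
        have i3 : IntervalIntegrable (fun t => (2 / δ) * min 1 ‖f t - f (t + τ)‖)
            volume ξ (ξ + L) := (iimin ξ (ξ + L)).const_mul _
        have i4 : IntervalIntegrable (fun t => u (t + τ)) volume ξ (ξ + L) :=
          intInt (aesm_shift mu τ) (C := 2) (fun t => by
            rw [Real.norm_eq_abs, abs_of_nonneg (hu0 _)]; exact hu2 _) _ _
        -- pointwise triangle inequality
        have hpt : ∀ t, ‖sgn (f t) - sgn (f (t + τ))‖ ≤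
            u t + (2 / δ) * min 1 ‖f t - f (t + τ)‖ + u (t + τ) := by
          intro t
          have hd : sgn (f t) - sgn (f (t + τ)) =
              (sgn (f t) - Gm δ (f t)) + (Gm δ (f t) - Gm δ (f (t + τ)))
                + (Gm δ (f (t + τ)) - sgn (f (t + τ))) := by abel
          calc ‖sgn (f t) - sgn (f (t + τ))‖
              ≤ ‖sgn (f t) - Gm δ (f t)‖ + ‖Gm δ (f t) - Gm δ (f (t + τ))‖
                + ‖Gm δ (f (t + τ)) - sgn (f (t + τ))‖ := by
                rw [hd]; exact norm_add₃_le
            _ ≤ u t + (2 / δ) * min 1 ‖f t - f (t + τ)‖ + u (t + τ) := by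
                refine add_le_add (add_le_add (le_refl _) (Gm_lip hδ hδ1 _ _)) ?_
                rw [norm_sub_rev]
        -- integral splitting
        have hsplit : (∫ t in ξ..(ξ + L), ‖sgn (f t) - sgn (f (t + τ))‖) ≤
            (∫ t in ξ..(ξ + L), u t) + (∫ t in ξ..(ξ + L), (2 / δ) * min 1 ‖f t - f (t + τ)‖)
              + (∫ t in ξ..(ξ + L), u (t + τ)) := by
          have := intervalIntegral.integral_mono_on hξL i1 ((i2.add i3).add i4)
            (fun t _ => hpt t)
          rwa [intervalIntegral.integral_add (i2.add i3) i4,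
            intervalIntegral.integral_add i2 i3] at this
        -- middle term
        have hmid : (∫ t in ξ..(ξ + L), min 1 ‖f t - f (t + τ)‖) ≤ ε * δ / 8 * L := by
          set a : ℕ → ℝ := fun k => ξ + k * l₂ with ha
          have hadj : ∀ k < N, IntervalIntegrable (fun t => min 1 ‖f t - f (t + τ)‖)
              volume (a k) (a (k + 1)) := fun k _ => iimin _ _
          have hsum := intervalIntegral.sum_integral_adjacent_intervals hadj
          have ha0 : a 0 = ξ := by simp [ha]
          have haN : a N = ξ + L := by simp [ha, hLdef]
          rw [ha0, haN] at hsum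
          rw [← hsum]
          have hstep : ∀ k : ℕ, a (k + 1) = a k + l₂ := by
            intro k; simp only [ha]; push_cast; ring
          calc (∑ k ∈ Finset.range N, ∫ t in (a k)..(a (k + 1)), min 1 ‖f t - f (t + τ)‖)
              ≤ ∑ _k ∈ Finset.range N, ε * δ / 8 * l₂ := by
                apply Finset.sum_le_sum
                intro k _
                rw [hstep k]
                exact hchunk (a k)
            _ = N * (ε * δ / 8 * l₂) := by
                rw [Finset.sum_const, Finset.card_range, nsmul_eq_mul]
            _ = ε * δ / 8 * L := by rw [hLdef]; ring
        -- shifted term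
        have hshift : (∫ t in ξ..(ξ + L), u (t + τ)) ≤ 4 * (ε / 32) * L := by
          have := intervalIntegral.integral_comp_add_right (a := ξ) (b := ξ + L) (f := u) τ
          rw [this]
          have h2 : ξ + L + τ = (ξ + τ) + L := by ring
          rw [h2]
          exact hIu (ξ + τ)
        -- put together
        have htotal : (∫ t in ξ..(ξ + L), ‖sgn (f t) - sgn (f (t + τ))‖) ≤ (ε / 2) * L := by
          have hmid' : (∫ t in ξ..(ξ + L), (2 / δ) * min 1 ‖f t - f (t + τ)‖)
              ≤ (ε / 4) * L := by
            rw [intervalIntegral.integral_const_mul]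
            calc (2 / δ) * (∫ t in ξ..(ξ + L), min 1 ‖f t - f (t + τ)‖)
                ≤ (2 / δ) * (ε * δ / 8 * L) := by
                  apply mul_le_mul_of_nonneg_left hmid (by positivity)
              _ = (ε / 4) * L := by field_simp; ring
          have h1 := hIu ξ
          calc (∫ t in ξ..(ξ + L), ‖sgn (f t) - sgn (f (t + τ))‖) ≤
              (∫ t in ξ..(ξ + L), u t) + (∫ t in ξ..(ξ + L), (2 / δ) * min 1 ‖f t - f (t + τ)‖)
                + (∫ t in ξ..(ξ + L), u (t + τ)) := hsplit
            _ ≤ 4 * (ε / 32) * L + (ε / 4) * L + 4 * (ε / 32) * L :=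
              add_le_add (add_le_add h1 hmid') hshift
            _ = (ε / 2) * L := by ring
        calc (1 / L) * (∫ t in ξ..(ξ + L), ‖sgn (f t) - sgn (f (t + τ))‖)
            ≤ (1 / L) * ((ε / 2) * L) := by
              apply mul_le_mul_of_nonneg_left htotal (by positivity)
          _ = ε / 2 := by field_simp
      exact lt_of_le_of_lt (ciSup_le hper) (by linarith)
  · -- the Tendsto statement
    rw [Metric.tendsto_atTop]
    intro ε hε
    obtain ⟨δ, hδ, l₁, hl₁, hsup⟩ := hsep (ε / 3) (by positivity)
    have hvol := sep_bound hl₁ hsup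
    refine ⟨max l₁ 1, fun L hL => ?_⟩
    have hl₁L : l₁ ≤ L := (le_max_left _ _).trans hL
    have hL0 : 0 < L := lt_of_lt_of_le hl₁ hl₁L
    have hsub : {t : ℝ | f t = 0} ⊆ {t : ℝ | ‖f t‖ < δ} := by
      intro t ht
      simp only [Set.mem_setOf_eq] at ht ⊢
      rw [ht, norm_zero]; exact hδ
    have hterm : ∀ ξ : ℝ,
        (1 / L) * (volume ({t : ℝ | f t = 0} ∩ Set.Icc ξ (ξ + L))).toReal ≤ 2 * (ε / 3) := by
      intro ξ
      have h1 : volume ({t : ℝ | f t = 0} ∩ Set.Icc ξ (ξ + L)) ≤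
          ENNReal.ofReal (2 * (ε / 3) * L) :=
        le_trans (measure_mono (Set.inter_subset_inter_left _ hsub))
          (cover hl₁ (by positivity) hvol ξ L hl₁L)
      have h2 : (volume ({t : ℝ | f t = 0} ∩ Set.Icc ξ (ξ + L))).toReal ≤ 2 * (ε / 3) * L := by
        calc (volume ({t : ℝ | f t = 0} ∩ Set.Icc ξ (ξ + L))).toReal
            ≤ (ENNReal.ofReal (2 * (ε / 3) * L)).toReal :=
              ENNReal.toReal_mono ENNReal.ofReal_ne_top h1
          _ = 2 * (ε / 3) * L := ENNReal.toReal_ofReal (by positivity)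
      calc (1 / L) * (volume ({t : ℝ | f t = 0} ∩ Set.Icc ξ (ξ + L))).toReal
          ≤ (1 / L) * (2 * (ε / 3) * L) := by
            apply mul_le_mul_of_nonneg_left h2 (by positivity)
        _ = 2 * (ε / 3) := by field_simp
    rw [Real.dist_eq, sub_zero, abs_of_nonneg (Real.iSup_nonneg fun ξ => by positivity)]
    exact lt_of_le_of_lt (ciSup_le hterm) (by linarith)
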